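/- arXiv:1908.09950 — 4 statements merged into one kernel-verified Lean document; each statement's English description precedes it below -/
import Mathlib

section
/- The Minkowski sum of two constrained zonotopes Z = {c_z + G_z ξ : ‖ξ‖∞ ≤ 1, A_z ξ = b_z} and W = {c_w + G_w η : ‖η‖∞ ≤ 1, A_w η = b_w} in ℝⁿ equals the constrained zonotope with center c_z + c_w, generator matrix [G_z G_w], constraint matrix blockdiag(A_z, A_w), and constraint vector (b_z; b_w). -/
open Matrix

/-- The Minkowski sum of two constrained zonotopes is the constrained zonotope
with center `c_z + c_w`, generators `[G_z  G_w]`, constraint matrix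
`blkdiag(A_z, A_w)` and right-hand side `(b_z; b_w)`. -/
theorem constrained_zonotope_minkowski_sum
    (n gz gw cz' cw' : ℕ)
    (Gz : Matrix (Fin n) (Fin gz) ℝ) (cz : Fin n → ℝ)
    (Az : Matrix (Fin cz') (Fin gz) ℝ) (bz : Fin cz' → ℝ)
    (Gw : Matrix (Fin n) (Fin gw) ℝ) (cw : Fin n → ℝ)
    (Aw : Matrix (Fin cw') (Fin gw) ℝ) (bw : Fin cw' → ℝ) :
    {x : Fin n → ℝ | ∃ z ∈ {x : Fin n → ℝ | ∃ ξ : Fin gz → ℝ,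
          (∀ i, |ξ i| ≤ 1) ∧ Az.mulVec ξ = bz ∧ x = cz + Gz.mulVec ξ},
        ∃ w ∈ {x : Fin n → ℝ | ∃ η : Fin gw → ℝ,
          (∀ i, |η i| ≤ 1) ∧ Aw.mulVec η = bw ∧ x = cw + Gw.mulVec η},
        x = z + w}
    = {x : Fin n → ℝ | ∃ ξ : Fin gz ⊕ Fin gw → ℝ,
        (∀ i, |ξ i| ≤ 1) ∧
        (Matrix.fromBlocks Az 0 0 Aw).mulVec ξ = Sum.elim bz bw ∧
        x = (cz + cw) + (Matrix.fromCols Gz Gw).mulVec ξ} := by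
  ext x
  simp only [Set.mem_setOf_eq]
  constructor
  · rintro ⟨z, ⟨ξ, hξ, hAz, rfl⟩, w, ⟨η, hη, hAw, rfl⟩, rfl⟩
    refine ⟨Sum.elim ξ η, ?_, ?_, ?_⟩
    · intro i
      cases i with
      | inl i => simpa using hξ i
      | inr i => simpa using hη i
    · rw [fromBlocks_mulVec]
      ext (i | i) <;>
        simp [Sum.elim_comp_inl, Sum.elim_comp_inr, hAz, hAw, mulVec_zero]
    · rw [fromCols_mulVec_sumElim]
      abel
  · rintro ⟨ξ, hξ, hA, rfl⟩
    rw [fromBlocks_mulVec] at hA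
    refine ⟨cz + Gz.mulVec (ξ ∘ Sum.inl), ⟨ξ ∘ Sum.inl, fun i => hξ _, ?_, rfl⟩,
      cw + Gw.mulVec (ξ ∘ Sum.inr), ⟨ξ ∘ Sum.inr, fun i => hξ _, ?_, rfl⟩, ?_⟩
    · have := fun i => congrFun hA (Sum.inl i)
      ext i; simpa [mulVec_zero] using this i
    · have := fun i => congrFun hA (Sum.inr i)
      ext i; simpa [mulVec_zero] using this i
    · have : (fromCols Gz Gw) *ᵥ ξ = Gz *ᵥ (ξ ∘ Sum.inl) + Gw *ᵥ (ξ ∘ Sum.inr) := by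
        have h := fromCols_mulVec_sumElim Gz Gw (ξ ∘ Sum.inl) (ξ ∘ Sum.inr)
        rwa [show Sum.elim (ξ ∘ Sum.inl) (ξ ∘ Sum.inr) = ξ by ext (i|i) <;> rfl] at h
      rw [this]; abel
end

section
/- The generalized intersection of constrained zonotopes is a constrained zonotope: given Z = {c_z + G_z ξ : ‖ξ‖∞ ≤ 1, A_z ξ = b_z} ⊂ ℝⁿ, Y = {c_y + G_y η : ‖η‖∞ ≤ 1, A_y η = b_y} ⊂ ℝ^m, and R ∈ ℝ^{m×n}, the set Z ∩_R Y := {z ∈ Z : Rz ∈ Y} equals the constrained zonotope with center c_z, generators [G_z 0], constraint matrix with rows (A_z 0), (0 A_y), (R G_z −G_y), and right-hand side (b_z; b_y; c_y − R c_z). -/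
open Matrix

/-- The generalized intersection `Z ∩_R Y = {z ∈ Z : Rz ∈ Y}` of constrained
zonotopes equals the constrained zonotope with center `c_z`, generators
`[G_z 0]`, constraint matrix with row blocks `(A_z 0)`, `(0 A_y)`,
`(R G_z  −G_y)`, and right-hand side `(b_z; b_y; c_y − R c_z)`. -/
theorem constrained_zonotope_generalized_intersection
    (n m gz gy cz' cy' : ℕ)
    (Gz : Matrix (Fin n) (Fin gz) ℝ) (cz : Fin n → ℝ)
    (Az : Matrix (Fin cz') (Fin gz) ℝ) (bz : Fin cz' → ℝ)
    (Gy : Matrix (Fin m) (Fin gy) ℝ) (cy : Fin m → ℝ)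
    (Ay : Matrix (Fin cy') (Fin gy) ℝ) (by' : Fin cy' → ℝ)
    (R : Matrix (Fin m) (Fin n) ℝ) :
    {z : Fin n → ℝ |
        z ∈ {x : Fin n → ℝ | ∃ ξ : Fin gz → ℝ,
          (∀ i, |ξ i| ≤ 1) ∧ Az.mulVec ξ = bz ∧ x = cz + Gz.mulVec ξ} ∧
        R.mulVec z ∈ {y : Fin m → ℝ | ∃ η : Fin gy → ℝ,
          (∀ i, |η i| ≤ 1) ∧ Ay.mulVec η = by' ∧ y = cy + Gy.mulVec η}}
    = {x : Fin n → ℝ | ∃ ζ : Fin gz ⊕ Fin gy → ℝ,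
        (∀ i, |ζ i| ≤ 1) ∧
        (Matrix.fromRows (Matrix.fromBlocks Az 0 0 Ay)
            (Matrix.fromCols (R * Gz) (-Gy))).mulVec ζ
          = Sum.elim (Sum.elim bz by') (cy - R.mulVec cz) ∧
        x = cz + (Matrix.fromCols Gz (0 : Matrix (Fin n) (Fin gy) ℝ)).mulVec ζ} := by
  ext x
  simp only [Set.mem_setOf_eq]
  constructor
  · rintro ⟨⟨ξ, hξ, hAz, hx⟩, η, hη, hAy, hRx⟩
    have h2 : (R * Gz).mulVec ξ + (-Gy).mulVec η = cy - R.mulVec cz := by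
      rw [hx, Matrix.mulVec_add] at hRx
      funext i
      have := congrFun hRx i
      simp only [Pi.add_apply, Pi.sub_apply, Matrix.neg_mulVec, Pi.neg_apply,
        Matrix.mulVec_mulVec] at this ⊢
      linarith
    refine ⟨Sum.elim ξ η, ?_, ?_, ?_⟩
    · rintro (i | i)
      · exact hξ i
      · exact hη i
    · rw [Matrix.fromRows_mulVec, Matrix.fromBlocks_mulVec,
        Matrix.fromCols_mulVec_sumElim]
      simp only [Sum.elim_comp_inl, Sum.elim_comp_inr, hAz, hAy, h2]
      simp
    · rw [hx, Matrix.fromCols_mulVec_sumElim, Matrix.zero_mulVec, add_zero]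
  · rintro ⟨ζ, hζ, hA, hx⟩
    set ξ : Fin gz → ℝ := fun i => ζ (Sum.inl i) with hξdef
    set η : Fin gy → ℝ := fun i => ζ (Sum.inr i) with hηdef
    have hζ' : ζ = Sum.elim ξ η := by funext j; cases j <;> rfl
    rw [hζ', Matrix.fromRows_mulVec, Matrix.fromBlocks_mulVec,
      Matrix.fromCols_mulVec_sumElim] at hA
    simp only [Sum.elim_comp_inl, Sum.elim_comp_inr, Matrix.zero_mulVec,
      add_zero, zero_add] at hA
    have h1 : Az.mulVec ξ = bz := by
      funext i
      have := congrFun hA (Sum.inl (Sum.inl i))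
      simpa using this
    have h2 : Ay.mulVec η = by' := by
      funext i
      have := congrFun hA (Sum.inl (Sum.inr i))
      simpa using this
    have h3 : (R * Gz).mulVec ξ + (-Gy).mulVec η = cy - R.mulVec cz := by
      funext i
      exact congrFun hA (Sum.inr i)
    have hx' : x = cz + Gz.mulVec ξ := by
      rw [hx, hζ', Matrix.fromCols_mulVec_sumElim, Matrix.zero_mulVec, add_zero]
    refine ⟨⟨ξ, fun i => hζ _, h1, hx'⟩, η, fun i => hζ _, h2, ?_⟩
    rw [hx', Matrix.mulVec_add]
    funext i
    have := congrFun h3 i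
    simp only [Pi.add_apply, Pi.sub_apply, Matrix.neg_mulVec, Pi.neg_apply,
      Matrix.mulVec_mulVec] at this ⊢
    linarith
end

section
/- (CZ-inclusion) Let X = p ⊕ M B∞(A,b) ⊂ ℝ^m be a constrained zonotope, J ∈ 𝕀ℝ^{n×m} an interval matrix, and S = {Ĵx : Ĵ ∈ J, x ∈ X}. Let X̄ = p̄ ⊕ M̄ B∞ be a zonotope with X ⊆ X̄, let m be an interval vector with midpoint 0 satisfying (J − mid(J)) p̄ ⊆ m, and let P be the diagonal matrix with P_ii = (1/2) diam(m_i) + (1/2) Σ_j Σ_k diam(J_ik) |M̄_kj|. Then S ⊆ mid(J) X ⊕ P B∞ⁿ. -/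
open Matrix BigOperators

/-- CZ-inclusion (Theorem 1): if `X = p ⊕ M B∞(A,b)`, `J` is an interval matrix,
`X̄ = p̄ ⊕ M̄ B∞` is a zonotope containing `X`, `m` is an interval vector with
midpoint `0` and radii `mrad` containing `(J − mid J) p̄`, and `P` is the diagonal
matrix with `P_ii = (1/2)diam(m_i) + (1/2)Σ_j Σ_k diam(J_ik)|M̄_kj|`, then
`{Ĵx : Ĵ ∈ J, x ∈ X} ⊆ mid(J) X ⊕ P B∞ⁿ`. -/
theorem cz_inclusion
    (m n ng nc ngbar : ℕ)
    (p : Fin m → ℝ) (M : Matrix (Fin m) (Fin ng) ℝ)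
    (A : Matrix (Fin nc) (Fin ng) ℝ) (b : Fin nc → ℝ)
    (Jl Ju : Matrix (Fin n) (Fin m) ℝ) (hJ : ∀ i k, Jl i k ≤ Ju i k)
    (pbar : Fin m → ℝ) (Mbar : Matrix (Fin m) (Fin ngbar) ℝ)
    -- the zonotope X̄ = p̄ ⊕ M̄ B∞ contains X = p ⊕ M B∞(A,b)
    (hXbar : {x : Fin m → ℝ | ∃ ξ : Fin ng → ℝ,
        (∀ i, |ξ i| ≤ 1) ∧ A.mulVec ξ = b ∧ x = p + M.mulVec ξ} ⊆
      {x : Fin m → ℝ | ∃ γ : Fin ngbar → ℝ,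
        (∀ i, |γ i| ≤ 1) ∧ x = pbar + Mbar.mulVec γ})
    (mrad : Fin n → ℝ)
    -- the interval vector m = [−mrad, mrad] (midpoint 0) contains (J − mid J) p̄
    (hm : ∀ Jhat : Matrix (Fin n) (Fin m) ℝ,
      (∀ i k, Jl i k ≤ Jhat i k ∧ Jhat i k ≤ Ju i k) →
      ∀ i, |((Jhat - Matrix.of fun i k => (Jl i k + Ju i k) / 2).mulVec pbar) i| ≤ mrad i)
    (P : Fin n → ℝ)
    (hP : ∀ i, P i = mrad i + (1 / 2) * ∑ j, ∑ k, (Ju i k - Jl i k) * |Mbar k j|) :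
    ∀ Jhat : Matrix (Fin n) (Fin m) ℝ,
      (∀ i k, Jl i k ≤ Jhat i k ∧ Jhat i k ≤ Ju i k) →
      ∀ x ∈ {x : Fin m → ℝ | ∃ ξ : Fin ng → ℝ,
          (∀ i, |ξ i| ≤ 1) ∧ A.mulVec ξ = b ∧ x = p + M.mulVec ξ},
        ∃ x' ∈ {x : Fin m → ℝ | ∃ ξ : Fin ng → ℝ,
            (∀ i, |ξ i| ≤ 1) ∧ A.mulVec ξ = b ∧ x = p + M.mulVec ξ},
          ∃ e : Fin n → ℝ, (∀ i, |e i| ≤ 1) ∧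
            Jhat.mulVec x =
              (Matrix.of fun i k => (Jl i k + Ju i k) / 2 : Matrix (Fin n) (Fin m) ℝ).mulVec x'
                + (Matrix.diagonal P).mulVec e := by

  intro Jhat hJhat x hx
  set mid : Matrix (Fin n) (Fin m) ℝ := Matrix.of fun i k => (Jl i k + Ju i k) / 2 with hmiddef
  obtain ⟨γ, hγ, hxγ⟩ := hXbar hx
  have hmidmem : ∀ i k, Jl i k ≤ mid i k ∧ mid i k ≤ Ju i k := by
    intro i k
    have := hJ i k
    constructor <;> simp [hmiddef] <;> linarith
  have hmrad : ∀ i, 0 ≤ mrad i := fun i =>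
    le_trans (abs_nonneg _) (hm mid hmidmem i)
  set r : Fin n → ℝ := Jhat.mulVec x - mid.mulVec x with hrdef
  have hrbound : ∀ i, |r i| ≤ P i := by
    intro i
    have hsplit : r = (Jhat - mid).mulVec pbar + (Jhat - mid).mulVec (Mbar.mulVec γ) := by
      rw [hrdef, ← Matrix.mulVec_add, ← Matrix.sub_mulVec, hxγ]
    have h1 : |((Jhat - mid).mulVec pbar) i| ≤ mrad i := hm Jhat hJhat i
    have h2 : |((Jhat - mid).mulVec (Mbar.mulVec γ)) i| ≤
        ∑ k, (Ju i k - Jl i k) / 2 * ∑ j, |Mbar k j| := by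
      have : ((Jhat - mid).mulVec (Mbar.mulVec γ)) i =
          ∑ k, (Jhat i k - mid i k) * (Mbar.mulVec γ) k := by
        simp [Matrix.mulVec, dotProduct, Matrix.sub_apply]
      rw [this]
      refine le_trans (Finset.abs_sum_le_sum_abs _ _) ?_
      refine Finset.sum_le_sum fun k _ => ?_
      rw [abs_mul]
      refine mul_le_mul ?_ ?_ (abs_nonneg _) (by linarith [hJ i k])
      · have hl := (hJhat i k).1
        have hu := (hJhat i k).2
        rw [abs_le]
        constructor <;> simp [hmiddef] <;> linarith
      · have : (Mbar.mulVec γ) k = ∑ j, Mbar k j * γ j := by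
          simp [Matrix.mulVec, dotProduct]
        rw [this]
        refine le_trans (Finset.abs_sum_le_sum_abs _ _) ?_
        refine Finset.sum_le_sum fun j _ => ?_
        rw [abs_mul]
        calc |Mbar k j| * |γ j| ≤ |Mbar k j| * 1 :=
              mul_le_mul_of_nonneg_left (hγ j) (abs_nonneg _)
          _ = |Mbar k j| := mul_one _
    have heq : ∑ k, (Ju i k - Jl i k) / 2 * ∑ j, |Mbar k j| =
        (1 / 2) * ∑ j, ∑ k, (Ju i k - Jl i k) * |Mbar k j| := by
      rw [Finset.sum_comm, Finset.mul_sum]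
      refine Finset.sum_congr rfl fun k _ => ?_
      rw [Finset.mul_sum, Finset.mul_sum]
      refine Finset.sum_congr rfl fun j _ => ?_
      ring
    calc |r i| ≤ |((Jhat - mid).mulVec pbar) i| + |((Jhat - mid).mulVec (Mbar.mulVec γ)) i| := by
          rw [hsplit]; exact abs_add_le _ _
      _ ≤ mrad i + (1 / 2) * ∑ j, ∑ k, (Ju i k - Jl i k) * |Mbar k j| := by
          rw [← heq]; exact add_le_add h1 h2
      _ = P i := (hP i).symm
  refine ⟨x, hx, fun i => if h : P i = 0 then 0 else r i / P i, ?_, ?_⟩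
  · intro i
    by_cases h : P i = 0
    · simp [h]
    · have hPpos : 0 < P i := lt_of_le_of_ne (le_trans (abs_nonneg _) (hrbound i)) (Ne.symm h)
      simp only [h, dif_neg, not_false_iff]
      rw [abs_div, abs_of_pos hPpos, div_le_one hPpos]
      exact hrbound i
  · funext i
    have hd : ((Matrix.diagonal P).mulVec fun i => if h : P i = 0 then 0 else r i / P i) i =
        P i * (if h : P i = 0 then 0 else r i / P i) := by
      simp [Matrix.mulVec_diagonal]
    have : P i * (if h : P i = 0 then (0:ℝ) else r i / P i) = r i := by
      by_cases h : P i = 0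
      · have h1 := hrbound i
        rw [h] at h1
        have : r i = 0 := abs_eq_zero.mp (le_antisymm h1 (abs_nonneg _))
        simp [h, this]
      · simp [h]
        field_simp
    simp only [Pi.add_apply, hd, this]
    have : r i = Jhat.mulVec x i - mid.mulVec x i := by rw [hrdef]; rfl
    rw [this]; ring
end

section
/- (Mean value extension) Let μ : ℝⁿ × ℝ^{nw} → ℝⁿ be continuously differentiable, X ⊂ ℝⁿ and W ⊂ ℝ^{nw} constrained zonotopes, and h ∈ X. Let Z be a set with μ(h, w) ∈ Z for all w ∈ W, and let J be an interval matrix containing the transposed gradient ∇ₓᵀμ(x, w) for all (x,w) ∈ X × W. Then for all (x,w) ∈ X × W, μ(x,w) ∈ Z ⊕ ◁(J, X − h), where ◁(J, X−h) is any set satisfying {Ĵ(x−h) : Ĵ ∈ J, x ∈ X} ⊆ ◁(J, X−h). -/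
open Matrix

/-- A continuous linear functional on `Fin n → ℝ` is determined by its values
on the standard basis. -/
lemma clm_apply_eq_sum_single (n : ℕ) (L : (Fin n → ℝ) →L[ℝ] ℝ) (v : Fin n → ℝ) :
    L v = ∑ j, v j * L (Pi.single j 1) := by
  have := (L : (Fin n → ℝ) →ₗ[ℝ] ℝ).pi_apply_eq_sum_univ v
  simp only [ContinuousLinearMap.coe_coe] at this
  rw [this]
  congr 1; funext j
  rw [smul_eq_mul]
  congr 2
  funext k
  simp [Pi.single_apply, eq_comm]

/-- Mean value extension (Theorem 2): if `μ` is C¹, `X` and `W` are constrained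
zonotopes, `h ∈ X`, `Z ⊇ μ(h, W)`, `J` is an interval matrix containing
`∇ₓᵀμ(x,w)` for all `(x,w) ∈ X × W`, and `Enc ⊇ {Ĵ(x−h) : Ĵ ∈ J, x ∈ X}`,
then `μ(X, W) ⊆ Z ⊕ Enc`. -/
theorem mean_value_extension
    (n nw ng nc ngw ncw : ℕ)
    (μ : (Fin n → ℝ) → (Fin nw → ℝ) → (Fin n → ℝ))
    (hC1 : ContDiff ℝ 1 (fun p : (Fin n → ℝ) × (Fin nw → ℝ) => μ p.1 p.2))
    (Gx : Matrix (Fin n) (Fin ng) ℝ) (cx : Fin n → ℝ)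
    (Ax : Matrix (Fin nc) (Fin ng) ℝ) (bx : Fin nc → ℝ)
    (Gw : Matrix (Fin nw) (Fin ngw) ℝ) (cw : Fin nw → ℝ)
    (Aw : Matrix (Fin ncw) (Fin ngw) ℝ) (bw : Fin ncw → ℝ)
    (X : Set (Fin n → ℝ)) (W : Set (Fin nw → ℝ))
    (hX : X = {x | ∃ ξ : Fin ng → ℝ,
        (∀ i, |ξ i| ≤ 1) ∧ Ax.mulVec ξ = bx ∧ x = cx + Gx.mulVec ξ})
    (hW : W = {w | ∃ η : Fin ngw → ℝ,
        (∀ i, |η i| ≤ 1) ∧ Aw.mulVec η = bw ∧ w = cw + Gw.mulVec η})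
    (h : Fin n → ℝ) (hhX : h ∈ X)
    (Z : Set (Fin n → ℝ)) (hZ : ∀ w ∈ W, μ h w ∈ Z)
    (Jl Ju : Matrix (Fin n) (Fin n) ℝ)
    -- J contains the transposed gradient of μ w.r.t. x on X × W
    (hJ : ∀ x ∈ X, ∀ w ∈ W, ∀ i j,
      Jl i j ≤ fderiv ℝ (fun x' => μ x' w i) x (Pi.single j 1) ∧
      fderiv ℝ (fun x' => μ x' w i) x (Pi.single j 1) ≤ Ju i j)
    (Enc : Set (Fin n → ℝ))
    -- Enc is any enclosure of {Ĵ(x − h) : Ĵ ∈ J, x ∈ X}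
    (hEnc : ∀ Jhat : Matrix (Fin n) (Fin n) ℝ,
      (∀ i j, Jl i j ≤ Jhat i j ∧ Jhat i j ≤ Ju i j) →
      ∀ x ∈ X, Jhat.mulVec (x - h) ∈ Enc) :
    ∀ x ∈ X, ∀ w ∈ W, ∃ z ∈ Z, ∃ e ∈ Enc, μ x w = z + e := by
  -- X is convex
  have hXconv : Convex ℝ X := by
    subst hX
    rintro x1 ⟨ξ1, hξ1, hA1, rfl⟩ x2 ⟨ξ2, hξ2, hA2, rfl⟩ a b ha hb hab
    refine ⟨a • ξ1 + b • ξ2, fun i => ?_, ?_, ?_⟩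
    · calc |(a • ξ1 + b • ξ2) i| ≤ |a * ξ1 i| + |b * ξ2 i| := by
            simpa [Pi.add_apply, Pi.smul_apply, smul_eq_mul] using
              abs_add_le (a * ξ1 i) (b * ξ2 i)
        _ ≤ a * 1 + b * 1 := by
            rw [abs_mul, abs_mul, abs_of_nonneg ha, abs_of_nonneg hb]
            exact add_le_add (mul_le_mul_of_nonneg_left (hξ1 i) ha)
              (mul_le_mul_of_nonneg_left (hξ2 i) hb)
        _ = 1 := by rw [mul_one, mul_one, hab]
    · rw [Matrix.mulVec_add, Matrix.mulVec_smul, Matrix.mulVec_smul, hA1, hA2,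
        ← add_smul, hab, one_smul]
    · rw [Matrix.mulVec_add, Matrix.mulVec_smul, Matrix.mulVec_smul]
      have : a • cx + b • cx = cx := by rw [← add_smul, hab, one_smul]
      rw [smul_add, smul_add]
      conv_rhs => rw [← this]
      abel
  intro x hx w hw
  -- differentiability of x' ↦ μ x' w i
  have hμdiff : Differentiable ℝ (fun p : (Fin n → ℝ) × (Fin nw → ℝ) => μ p.1 p.2) :=
    hC1.differentiable one_ne_zero
  have hdiff : ∀ i : Fin n, Differentiable ℝ (fun x' => μ x' w i) := by
    intro i
    have h1 : Differentiable ℝ (fun x' : Fin n → ℝ => μ x' w) :=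
      hμdiff.comp (differentiable_id.prodMk (differentiable_const w))
    exact (ContinuousLinearMap.proj (R := ℝ) (φ := fun _ : Fin n => ℝ) i).differentiable.comp h1
  -- mean value theorem per component
  have key : ∀ i : Fin n, ∃ δ ∈ X,
      μ x w i - μ h w i = fderiv ℝ (fun x' => μ x' w i) δ (x - h) := by
    intro i
    set γ : ℝ → (Fin n → ℝ) := fun t => h + t • (x - h) with hγ
    have hγd : ∀ t : ℝ, HasDerivAt γ (x - h) t := by
      intro t
      have := ((hasDerivAt_id t).smul_const (x - h)).const_add h; rw [one_smul] at this; exact this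
    have hφ : ∀ t : ℝ, HasDerivAt (fun s => μ (γ s) w i)
        (fderiv ℝ (fun x' => μ x' w i) (γ t) (x - h)) t := by
      intro t
      exact ((hdiff i (γ t)).hasFDerivAt).comp_hasDerivAt t (hγd t)
    obtain ⟨c, hc, hceq⟩ := exists_hasDerivAt_eq_slope (fun s => μ (γ s) w i)
      (fun t => fderiv ℝ (fun x' => μ x' w i) (γ t) (x - h)) one_pos
      (fun t _ => (hφ t).continuousAt.continuousWithinAt)
      (fun t _ => hφ t)
    have h10 : γ 1 = x := by funext k; simp [hγ]
    have h00 : γ 0 = h := by funext k; simp [hγ]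
    refine ⟨γ c, ?_, ?_⟩
    · have hgc : γ c = (1 - c) • h + c • x := by
        funext k
        simp only [hγ, Pi.add_apply, Pi.smul_apply, Pi.sub_apply, smul_eq_mul]
        ring
      rw [hgc]
      exact hXconv hhX hx (by linarith [hc.2]) (le_of_lt hc.1) (by ring)
    · rw [h10, h00] at hceq
      rw [hceq]
      ring
  choose δ hδX hδeq using key
  set Jhat : Matrix (Fin n) (Fin n) ℝ :=
    fun i j => fderiv ℝ (fun x' => μ x' w i) (δ i) (Pi.single j 1) with hJhat
  have hbounds : ∀ i j, Jl i j ≤ Jhat i j ∧ Jhat i j ≤ Ju i j :=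
    fun i j => hJ (δ i) (hδX i) w hw i j
  refine ⟨μ h w, hZ w hw, Jhat.mulVec (x - h), hEnc Jhat hbounds x hx, ?_⟩
  funext i
  have hsum := clm_apply_eq_sum_single n (fderiv ℝ (fun x' => μ x' w i) (δ i)) (x - h)
  have hmv : Jhat.mulVec (x - h) i = ∑ j, Jhat i j * (x - h) j := by
    simp [Matrix.mulVec, dotProduct]
  have hsum' : fderiv ℝ (fun x' => μ x' w i) (δ i) (x - h)
      = ∑ j, Jhat i j * (x - h) j := by
    rw [hsum]
    exact Finset.sum_congr rfl fun j _ => mul_comm _ _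
  have heq := hδeq i
  rw [hsum'] at heq
  simp only [Pi.add_apply]
  rw [hmv]
  have : (x - h) = fun j => x j - h j := rfl
  linarith [heq]
end
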